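/- arXiv:1503.07079 — 3 statements merged into one kernel-verified Lean document; each statement's English description precedes it below -/
import Mathlib

section
/- Let g be a real Lie algebra decomposed as g = g₁ ⊕ z with g₁ = [g,g] semisimple and z the center, and let θ : g → End(n) be a representation on a finite-dimensional real inner product space n such that the symmetric parts S(θ(Z)), Z ∈ z, pairwise commute and commute with all θ(Y), Y ∈ g. Let n = n₁ ⊕ … ⊕ n_l be the orthogonal decomposition into common eigenspaces of {S(θ(Z)) : Z ∈ z} with weights α₁,…,α_l ∈ z*. Then for every Y ∈ g₁ and Z ∈ z, tr(S(θ(Y)) S(θ(Z))) = 0. -/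
open Module

variable {n : Type*} [NormedAddCommGroup n] [InnerProductSpace ℝ n] [FiniteDimensional ℝ n]

attribute [local instance 100] LieRing.ofAssociativeRing

/-- The symmetric part `S(A) = (A + Aᵗ)/2` of an endomorphism of a finite-dimensional
real inner product space. -/
noncomputable def symmPart (A : n →ₗ[ℝ] n) : n →ₗ[ℝ] n :=
  ((1 : ℝ) / 2) • (A + LinearMap.adjoint A)

lemma adjoint_smul' (c : ℝ) (A : n →ₗ[ℝ] n) :
    LinearMap.adjoint (c • A) = c • LinearMap.adjoint A := by
  simpa using LinearMap.adjoint.map_smulₛₗ c A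

lemma symmPart_add (A B : n →ₗ[ℝ] n) : symmPart (A + B) = symmPart A + symmPart B := by
  simp only [symmPart, map_add, smul_add]
  module

lemma symmPart_smul (c : ℝ) (A : n →ₗ[ℝ] n) : symmPart (c • A) = c • symmPart A := by
  simp only [symmPart, adjoint_smul', smul_add]
  module

lemma adjoint_symmPart (A : n →ₗ[ℝ] n) :
    LinearMap.adjoint (symmPart A) = symmPart A := by
  simp only [symmPart, adjoint_smul', map_add, LinearMap.adjoint_adjoint]
  module

/-- trace of `[A,B] * S` vanishes if `S` commutes with `B`. -/
lemma trace_comm_mul_zero (A B S : Module.End ℝ n) (h : S * B = B * S) :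
    LinearMap.trace ℝ n (A * B * S - B * A * S) = 0 := by
  have h1 : LinearMap.trace ℝ n (B * A * S) = LinearMap.trace ℝ n (A * B * S) := by
    rw [mul_assoc, LinearMap.trace_mul_comm, mul_assoc, h, ← mul_assoc]
  rw [map_sub, h1, sub_self]

/-- Let `g = g₁ ⊕ z` with `g₁ = [g,g]` semisimple and `z` the center, and let
`θ : g → End(n)` be a representation on a finite-dimensional real inner product space
such that the symmetric parts `S(θ Z)`, `Z ∈ z`, pairwise commute and commute with all
`θ Y`.  Then `tr (S(θ Y) S(θ Z)) = 0` for all `Y ∈ g₁`, `Z ∈ z`. -/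
theorem trace_symmPart_commutator_center_zero
    (g : Type*) [LieRing g] [LieAlgebra ℝ g] [FiniteDimensional ℝ g]
    [LieAlgebra.IsSemisimple ℝ ↥(⁅(⊤ : LieIdeal ℝ g), (⊤ : LieIdeal ℝ g)⁆ : LieIdeal ℝ g)]
    (hsum : ∀ X : g, ∃ Y ∈ (⁅(⊤ : LieIdeal ℝ g), (⊤ : LieIdeal ℝ g)⁆ : LieIdeal ℝ g),
      ∃ Z ∈ LieAlgebra.center ℝ g, X = Y + Z)
    (θ : g →ₗ⁅ℝ⁆ Module.End ℝ n)
    (hcomm₁ : ∀ Z ∈ LieAlgebra.center ℝ g, ∀ Z' ∈ LieAlgebra.center ℝ g,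
      symmPart (θ Z) ∘ₗ symmPart (θ Z') = symmPart (θ Z') ∘ₗ symmPart (θ Z))
    (hcomm₂ : ∀ Z ∈ LieAlgebra.center ℝ g, ∀ Y : g,
      symmPart (θ Z) ∘ₗ θ Y = θ Y ∘ₗ symmPart (θ Z)) :
    ∀ Y ∈ (⁅(⊤ : LieIdeal ℝ g), (⊤ : LieIdeal ℝ g)⁆ : LieIdeal ℝ g),
      ∀ Z ∈ LieAlgebra.center ℝ g,
        LinearMap.trace ℝ n (symmPart (θ Y) ∘ₗ symmPart (θ Z)) = 0 := by
  intro Y hY Z hZ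
  set S : Module.End ℝ n := symmPart (θ Z) with hS
  -- S commutes with θ X for all X
  have hSθ : ∀ X : g, S * θ X = θ X * S := fun X => hcomm₂ Z hZ X
  -- S commutes with adjoint (θ X) for all X
  have hSθ' : ∀ X : g, S * LinearMap.adjoint (θ X) = LinearMap.adjoint (θ X) * S := by
    intro X
    have := congrArg LinearMap.adjoint (hSθ X)
    simpa [Module.End.mul_eq_comp, LinearMap.adjoint_comp, adjoint_symmPart, hS] using this.symm
  have hY' : Y ∈ Submodule.span ℝ
      {m | ∃ x ∈ (⊤ : LieIdeal ℝ g), ∃ n ∈ (⊤ : LieIdeal ℝ g), ⁅x, n⁆ = m} := by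
    rw [← LieSubmodule.lieIdeal_oper_eq_linear_span', LieSubmodule.mem_toSubmodule]
    exact hY
  change LinearMap.trace ℝ n (symmPart (θ Y) * S) = 0
  clear hY
  induction hY' using Submodule.span_induction with
  | mem x hx =>
    obtain ⟨a, -, b, -, rfl⟩ := hx
    have hab : θ ⁅a, b⁆ = θ a * θ b - θ b * θ a := by
      rw [LieHom.map_lie]; rfl
    have hadj : LinearMap.adjoint (θ a * θ b - θ b * θ a) =
        LinearMap.adjoint (θ b) * LinearMap.adjoint (θ a) -
        LinearMap.adjoint (θ a) * LinearMap.adjoint (θ b) := by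
      simp [Module.End.mul_eq_comp, LinearMap.adjoint_comp]
    have : symmPart (θ ⁅a, b⁆) * S =
        ((1 : ℝ) / 2) • ((θ a * θ b * S - θ b * θ a * S) +
          (LinearMap.adjoint (θ b) * LinearMap.adjoint (θ a) * S -
           LinearMap.adjoint (θ a) * LinearMap.adjoint (θ b) * S)) := by
      rw [hab, symmPart, hadj]
      noncomm_ring
    rw [this, map_smul, map_add,
      trace_comm_mul_zero (θ a) (θ b) S (hSθ b),
      trace_comm_mul_zero (LinearMap.adjoint (θ b)) (LinearMap.adjoint (θ a)) S (hSθ' a)]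
    simp
  | zero =>
    have : θ (0 : g) = 0 := θ.map_zero
    rw [this]
    simp [symmPart]
  | add x y hx hy ihx ihy =>
    rw [map_add θ x y, symmPart_add, add_mul, map_add, ihx, ihy, add_zero]
  | smul c x hx ihx =>
    rw [map_smul θ c x, symmPart_smul, smul_mul_assoc, map_smul, ihx, smul_zero]
end

section
/- Let a, b, d, e be real numbers with a, b, e nonzero. Then the two real numbers P = (1/2)(a⁴e⁴ + (b² − d²)²) + a²d²(e² − 4b²)(e² + 4b²) and Q = (1/2)(a² − b² + d²)²e⁴ + 4a⁴b²(4b² − e²) cannot both be negative. -/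
/-- The two quantities arising from the generalized Einstein equation on
`(Sl₂(ℝ)×Sl₂(ℝ))/Δ_{1,1}SO(2)` cannot both be negative. -/
theorem not_both_neg (a b d e : ℝ) (ha : a ≠ 0) (hb : b ≠ 0) (he : e ≠ 0) :
    ¬ ((1/2) * (a ^ 4 * e ^ 4 + (b ^ 2 - d ^ 2) ^ 2)
          + a ^ 2 * d ^ 2 * (e ^ 2 - 4 * b ^ 2) * (e ^ 2 + 4 * b ^ 2) < 0
        ∧ (1/2) * (a ^ 2 - b ^ 2 + d ^ 2) ^ 2 * e ^ 4
          + 4 * a ^ 4 * b ^ 2 * (4 * b ^ 2 - e ^ 2) < 0) := by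
  rintro ⟨hP, hQ⟩
  have ha2 : (0:ℝ) < a ^ 2 := by positivity
  have hb2 : (0:ℝ) < b ^ 2 := by positivity
  have he2 : (0:ℝ) < e ^ 2 := by positivity
  rcases le_or_gt (4 * b ^ 2) (e ^ 2) with h | h
  · nlinarith [sq_nonneg (b ^ 2 - d ^ 2), sq_nonneg (a ^ 2 * e ^ 2), mul_pos ha2 he2,
      mul_nonneg (mul_nonneg ha2.le (sq_nonneg d)) (sub_nonneg.2 h)]
  · have h1 : 0 ≤ (1/2) * (a ^ 2 - b ^ 2 + d ^ 2) ^ 2 * e ^ 4 := by positivity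
    have h2 : 0 < 4 * a ^ 4 * b ^ 2 * (4 * b ^ 2 - e ^ 2) := by
      have : 0 < 4 * b ^ 2 - e ^ 2 := by linarith
      positivity
    linarith
end

section
/- Every nonzero skew-symmetric bilinear form on the 3-dimensional real Lie algebra sl₂(ℝ) with a fixed inner product admits a Milnor basis: for any inner product on sl₂(ℝ) there exists an orthonormal basis A₁, A₂, A₃ and nonzero real numbers α, β, γ with [A₂,A₃] = αA₁, [A₃,A₁] = βA₂, [A₁,A₂] = γA₃. -/
open LieAlgebra.SpecialLinear

abbrev V := ↥(LieAlgebra.SpecialLinear.sl (Fin 2) ℝ)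

lemma mem_sl' (X : Matrix (Fin 2) (Fin 2) ℝ) :
    X ∈ LieAlgebra.SpecialLinear.sl (Fin 2) ℝ ↔ X 0 0 + X 1 1 = 0 := by
  change X ∈ LinearMap.ker (Matrix.traceLinearMap (Fin 2) ℝ ℝ) ↔ _
  rw [LinearMap.mem_ker]
  simp [Matrix.trace, Matrix.diag, Fin.sum_univ_two]

noncomputable def φ : V →ₗ[ℝ] (Fin 3 → ℝ) where
  toFun X := ![X.1 0 0, X.1 0 1, X.1 1 0]
  map_add' X Y := by funext i; fin_cases i <;> simp
  map_smul' c X := by funext i; fin_cases i <;> rfl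

noncomputable def ψ : (Fin 3 → ℝ) →ₗ[ℝ] V where
  toFun v := ⟨!![v 0, v 1; v 2, -(v 0)], by rw [mem_sl']; simp⟩
  map_add' v w := by
    apply Subtype.ext
    show !![_,_;_,_] = !![_,_;_,_] + !![_,_;_,_]
    ext i j; fin_cases i <;> fin_cases j <;> simp <;> ring
  map_smul' c v := by
    apply Subtype.ext
    show !![_,_;_,_] = c • !![_,_;_,_]
    ext i j; fin_cases i <;> fin_cases j <;> simp <;> ring

noncomputable def slEquiv : V ≃ₗ[ℝ] (Fin 3 → ℝ) :=
  { φ with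
    invFun := ψ
    left_inv := by
      intro X
      apply Subtype.ext
      have h : X.1 0 0 + X.1 1 1 = 0 := (mem_sl' X.1).mp X.2
      show !![_,_;_,_] = X.1
      ext i j; fin_cases i <;> fin_cases j <;> simp [φ] <;> linarith
    right_inv := by
      intro v; funext i; fin_cases i <;> simp [φ, ψ] }

instance : FiniteDimensional ℝ V := Module.Finite.equiv slEquiv.symm

lemma finrank_V : Module.finrank ℝ V = 3 := by
  rw [slEquiv.finrank_eq]; simp

noncomputable def Es : V := LieAlgebra.SpecialLinear.single (0 : Fin 2) 1 (by decide) (1 : ℝ)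
noncomputable def Fs : V := LieAlgebra.SpecialLinear.single (1 : Fin 2) 0 (by decide) (1 : ℝ)
noncomputable def Hs : V := ⁅Es, Fs⁆

lemma decomp (x : V) :
    x = (x.1 0 0) • ⁅Es, Fs⁆ + ((x.1 0 1)/2) • ⁅Hs, Es⁆ + (-(x.1 1 0)/2) • ⁅Hs, Fs⁆ := by
  have h : x.1 0 0 + x.1 1 1 = 0 := (mem_sl' x.1).mp x.2
  apply Subtype.ext
  have hEF : (⁅Es, Fs⁆ : V).1 = !![1,0;0,-1] := by
    rw [LieAlgebra.SpecialLinear.sl_bracket]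
    show Matrix.single 0 1 (1:ℝ) * Matrix.single 1 0 1 -
      Matrix.single 1 0 1 * Matrix.single 0 1 1 = _
    ext i j
    fin_cases i <;> fin_cases j <;>
      norm_num [Matrix.mul_apply, Matrix.single, Fin.sum_univ_two,
        Matrix.vecHead, Matrix.vecTail]
  have hHE : (⁅Hs, Es⁆ : V).1 = !![0,2;0,0] := by
    rw [LieAlgebra.SpecialLinear.sl_bracket]
    show (⁅Es,Fs⁆ : V).1 * Matrix.single 0 1 (1:ℝ) -
      Matrix.single 0 1 1 * (⁅Es,Fs⁆ : V).1 = _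
    rw [hEF]
    ext i j
    fin_cases i <;> fin_cases j <;>
      norm_num [Matrix.mul_apply, Matrix.single, Fin.sum_univ_two,
        Matrix.vecHead, Matrix.vecTail]
  have hHF : (⁅Hs, Fs⁆ : V).1 = !![0,0;-2,0] := by
    rw [LieAlgebra.SpecialLinear.sl_bracket]
    show (⁅Es,Fs⁆ : V).1 * Matrix.single 1 0 (1:ℝ) -
      Matrix.single 1 0 1 * (⁅Es,Fs⁆ : V).1 = _
    rw [hEF]
    ext i j
    fin_cases i <;> fin_cases j <;>
      norm_num [Matrix.mul_apply, Matrix.single, Fin.sum_univ_two,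
        Matrix.vecHead, Matrix.vecTail]
  show x.1 = _
  have hc : ((x.1 0 0) • ⁅Es, Fs⁆ + ((x.1 0 1)/2) • ⁅Hs, Es⁆ + (-(x.1 1 0)/2) • ⁅Hs, Fs⁆ : V).1
      = (x.1 0 0) • (⁅Es, Fs⁆:V).1 + ((x.1 0 1)/2) • (⁅Hs, Es⁆:V).1
        + (-(x.1 1 0)/2) • (⁅Hs, Fs⁆:V).1 := rfl
  rw [hc, hEF, hHE, hHF]
  ext i j
  fin_cases i <;> fin_cases j <;> simp <;> linarith

attribute [local instance 100] LieRing.ofAssociativeRing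

lemma trace_ad_bracket (a b : V) :
    LinearMap.trace ℝ V ((LieAlgebra.ad ℝ V) ⁅a, b⁆) = 0 := by
  rw [LieHom.map_lie, Ring.lie_def, map_sub, LinearMap.trace_mul_comm, sub_self]

lemma unimodular (x : V) : LinearMap.trace ℝ V ((LieAlgebra.ad ℝ V) x) = 0 := by
  set ℓ : V →ₗ[ℝ] ℝ := (LinearMap.trace ℝ V) ∘ₗ (LieAlgebra.ad ℝ V).toLinearMap with hℓ
  have hb : ∀ a b : V, ℓ ⁅a, b⁆ = 0 := fun a b => trace_ad_bracket a b
  show ℓ x = 0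
  conv_lhs => rw [decomp x]
  rw [map_add, map_add, map_smul, map_smul, map_smul, hb, hb, hb]
  simp

section Det3
variable {D : V [⋀^Fin 3]→ₗ[ℝ] ℝ}

lemma up0 (x y z w : V) : Function.update ![w, y, z] 0 x = ![x, y, z] := by
  funext i; fin_cases i <;> simp [Function.update]

lemma up1 (x y z w : V) : Function.update ![x, w, z] 1 y = ![x, y, z] := by
  funext i; fin_cases i <;> simp [Function.update, Fin.ext_iff]

lemma up2 (x y z w : V) : Function.update ![x, y, w] 2 z = ![x, y, z] := by
  funext i; fin_cases i <;> simp [Function.update, Fin.ext_iff]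

lemma Dadd0 (x x' y z : V) : D ![x + x', y, z] = D ![x, y, z] + D ![x', y, z] := by
  rw [← up0 x y z 0, ← up0 x' y z 0, ← up0 (x + x') y z 0, D.map_update_add]

lemma Dadd1 (x y y' z : V) : D ![x, y + y', z] = D ![x, y, z] + D ![x, y', z] := by
  rw [← up1 x y z 0, ← up1 x y' z 0, ← up1 x (y + y') z 0, D.map_update_add]

lemma Dadd2 (x y z z' : V) : D ![x, y, z + z'] = D ![x, y, z] + D ![x, y, z'] := by
  rw [← up2 x y z 0, ← up2 x y z' 0, ← up2 x y (z + z') 0, D.map_update_add]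

lemma Dsmul0 (c : ℝ) (x y z : V) : D ![c • x, y, z] = c * D ![x, y, z] := by
  rw [← up0 x y z 0, ← up0 (c • x) y z 0, D.map_update_smul]; rfl

lemma Dsmul1 (c : ℝ) (x y z : V) : D ![x, c • y, z] = c * D ![x, y, z] := by
  rw [← up1 x y z 0, ← up1 x (c • y) z 0, D.map_update_smul]; rfl

lemma Dsmul2 (c : ℝ) (x y z : V) : D ![x, y, c • z] = c * D ![x, y, z] := by
  rw [← up2 x y z 0, ← up2 x y (c • z) 0, D.map_update_smul]; rfl

lemma Dswap01 (x y z : V) : D ![x, y, z] = -D ![y, x, z] := by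
  have h : ![y, x, z] ∘ Equiv.swap (0 : Fin 3) 1 = ![x, y, z] := by
    funext i; fin_cases i <;> simp [Equiv.swap_apply_def, Fin.ext_iff]
  rw [← h, D.map_swap _ (by decide : (0 : Fin 3) ≠ 1)]

lemma Dswap12 (x y z : V) : D ![x, y, z] = -D ![x, z, y] := by
  have h : ![x, z, y] ∘ Equiv.swap (1 : Fin 3) 2 = ![x, y, z] := by
    funext i; fin_cases i <;> simp [Equiv.swap_apply_def, Fin.ext_iff]
  rw [← h, D.map_swap _ (by decide : (1 : Fin 3) ≠ 2)]

lemma Drep01 (x z : V) : D ![x, x, z] = 0 :=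
  D.map_eq_zero_of_eq _ (by simp : ![x, x, z] 0 = ![x, x, z] 1) (by decide)

lemma Drep02 (x y : V) : D ![x, y, x] = 0 :=
  D.map_eq_zero_of_eq _ (by simp : ![x, y, x] 0 = ![x, y, x] 2) (by decide)

lemma Drep12 (x y : V) : D ![x, y, y] = 0 :=
  D.map_eq_zero_of_eq _ (by simp : ![x, y, y] 1 = ![x, y, y] 2) (by decide)

end Det3

noncomputable def core (ip : V →ₗ[ℝ] V →ₗ[ℝ] ℝ)
    (ipsymm : ∀ X Y, ip X Y = ip Y X)
    (ippos : ∀ X, X ≠ 0 → 0 < ip X X) : InnerProductSpace.Core ℝ V where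
  inner x y := ip x y
  conj_inner_symm x y := by simpa using ipsymm y x
  re_inner_nonneg x := by
    rcases eq_or_ne x 0 with h | h
    · simp [h]
    · exact le_of_lt (by simpa using ippos x h)
  add_left x y z := by simp [map_add]
  smul_left x y r := by simp [map_smul]
  definite x h := by
    by_contra hx
    exact absurd (by simpa using h) (ne_of_gt (ippos x hx))

noncomputable def crossb (D : V [⋀^Fin 3]→ₗ[ℝ] ℝ) (u : Fin 3 → V) (x y : V) : V :=
  ∑ k, D ![x, y, u k] • u k

lemma crossb_add_left (D : V [⋀^Fin 3]→ₗ[ℝ] ℝ) (u : Fin 3 → V) (x x' y : V) :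
    crossb D u (x + x') y = crossb D u x y + crossb D u x' y := by
  simp [crossb, Dadd0, add_smul, Finset.sum_add_distrib]

lemma crossb_smul_left (D : V [⋀^Fin 3]→ₗ[ℝ] ℝ) (u : Fin 3 → V) (c : ℝ) (x y : V) :
    crossb D u (c • x) y = c • crossb D u x y := by
  simp [crossb, Dsmul0, Finset.smul_sum, smul_smul]

lemma crossb_add_right (D : V [⋀^Fin 3]→ₗ[ℝ] ℝ) (u : Fin 3 → V) (x y y' : V) :
    crossb D u x (y + y') = crossb D u x y + crossb D u x y' := by
  simp [crossb, Dadd1, add_smul, Finset.sum_add_distrib]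

lemma crossb_smul_right (D : V [⋀^Fin 3]→ₗ[ℝ] ℝ) (u : Fin 3 → V) (c : ℝ) (x y : V) :
    crossb D u x (c • y) = c • crossb D u x y := by
  simp [crossb, Dsmul1, Finset.smul_sum, smul_smul]

lemma detBval (B : Module.Basis (Fin 3) ℝ V) (a b c : Fin 3) :
    B.det ![B a, B b, B c] =
      Matrix.det (Matrix.of fun i j => if (![a, b, c] j) = i then (1 : ℝ) else 0) := by
  rw [Module.Basis.det_apply]
  congr 1
  ext i j
  fin_cases j <;> simp [Module.Basis.toMatrix_apply, Module.Basis.repr_self_apply, Finsupp.single_apply] <;> congr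

set_option maxHeartbeats 2000000 in

open RealInnerProductSpace in
/-- Milnor's lemma for `sl₂(ℝ)`: for any inner product (positive-definite symmetric
bilinear form) on `sl₂(ℝ)` there is an orthonormal basis `A₁, A₂, A₃` and nonzero reals
`α, β, γ` with `[A₂,A₃] = αA₁`, `[A₃,A₁] = βA₂`, `[A₁,A₂] = γA₃`. -/
theorem sl2R_milnor_basis
    (ip : ↥(LieAlgebra.SpecialLinear.sl (Fin 2) ℝ) →ₗ[ℝ]
      ↥(LieAlgebra.SpecialLinear.sl (Fin 2) ℝ) →ₗ[ℝ] ℝ)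
    (ipsymm : ∀ X Y, ip X Y = ip Y X)
    (ippos : ∀ X, X ≠ 0 → 0 < ip X X) :
    ∃ b : Module.Basis (Fin 3) ℝ ↥(LieAlgebra.SpecialLinear.sl (Fin 2) ℝ),
      (∀ i j, ip (b i) (b j) = if i = j then 1 else 0) ∧
      ∃ α β γ : ℝ, α ≠ 0 ∧ β ≠ 0 ∧ γ ≠ 0 ∧
        ⁅b 1, b 2⁆ = α • b 0 ∧ ⁅b 2, b 0⁆ = β • b 1 ∧ ⁅b 0, b 1⁆ = γ • b 2 := by
  letI c : InnerProductSpace.Core ℝ V := core ip ipsymm ippos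
  letI : NormedAddCommGroup V := c.toNormedAddCommGroup
  letI : InnerProductSpace ℝ V := InnerProductSpace.ofCore c.toCore
  have hinner : ∀ x y : V, ⟪x, y⟫ = ip x y := fun _ _ => rfl
  set e : OrthonormalBasis (Fin 3) ℝ V :=
    (stdOrthonormalBasis ℝ V).reindex (finCongr finrank_V) with he
  set D : V [⋀^Fin 3]→ₗ[ℝ] ℝ := e.toBasis.det with hD
  -- inner products with cross products compute the determinant
  have horth : ∀ k l : Fin 3, ⟪e k, e l⟫ = if k = l then 1 else 0 :=
    fun k l => orthonormal_iff_ite.mp e.orthonormal k l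
  have hK : ∀ x y z : V, ⟪crossb D e x y, z⟫ = D ![x, y, z] := by
    intro x y z
    have hz : z = ⟪e 0, z⟫ • e 0 + ⟪e 1, z⟫ • e 1 + ⟪e 2, z⟫ • e 2 := by
      have := e.sum_repr' z
      rw [Fin.sum_univ_three] at this
      exact this.symm
    conv_rhs => rw [hz]
    rw [Dadd2, Dadd2, Dsmul2, Dsmul2, Dsmul2, crossb, Fin.sum_univ_three,
      inner_add_left, inner_add_left, real_inner_smul_left, real_inner_smul_left,
      real_inner_smul_left]
    ring
  -- the operator T with ⁅x,y⁆ = T (crossb x y)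
  set g : Fin 3 → V := ![⁅e 1, e 2⁆, ⁅e 2, e 0⁆, ⁅e 0, e 1⁆] with hg
  set T : V →ₗ[ℝ] V := e.toBasis.constr ℝ g with hT
  have hTe : ∀ k, T (e k) = g k := by
    intro k
    have h1 : e k = e.toBasis k := by rw [OrthonormalBasis.coe_toBasis]
    rw [h1, hT, Module.Basis.constr_basis]
  have hDval : ∀ a b c' : Fin 3, D ![e a, e b, e c'] =
      Matrix.det (Matrix.of fun i j => if (![a, b, c'] j) = i then (1 : ℝ) else 0) := by
    intro a b c'
    have h1 : (⇑e : Fin 3 → V) = ⇑e.toBasis := by rw [OrthonormalBasis.coe_toBasis]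
    rw [hD, show (![e a, e b, e c'] : Fin 3 → V) = ![e.toBasis a, e.toBasis b, e.toBasis c'] by
      rw [← h1], detBval]
  have hbrak : ∀ x y : V, ⁅x, y⁆ = T (crossb D e x y) := by
    let B1 : V →ₗ[ℝ] V →ₗ[ℝ] V :=
      LinearMap.mk₂ ℝ (fun x y => ⁅x, y⁆) add_lie smul_lie lie_add lie_smul
    let B2 : V →ₗ[ℝ] V →ₗ[ℝ] V :=
      LinearMap.mk₂ ℝ (fun x y => T (crossb D e x y))
        (fun x x' y => by simp only [crossb_add_left, map_add])
        (fun cc x y => by simp only [crossb_smul_left, map_smul])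
        (fun x y y' => by simp only [crossb_add_right, map_add])
        (fun cc x y => by simp only [crossb_smul_right, map_smul])
    have hB : B1 = B2 := by
      apply LinearMap.ext_basis (b₁ := e.toBasis) (b₂ := e.toBasis)
      intro i j
      show ⁅e.toBasis i, e.toBasis j⁆ = T (crossb D e (e.toBasis i) (e.toBasis j))
      rw [OrthonormalBasis.coe_toBasis]
      fin_cases i <;> fin_cases j <;>
        · rw [crossb, Fin.sum_univ_three, hDval, hDval, hDval]
          simp [Matrix.det_fin_three, Fin.ext_iff, hTe, hg, Matrix.cons_val]
          try rfl
          try rw [← lie_skew]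
          try norm_num [Fin.ext_iff]
    intro x y
    have h2 := LinearMap.congr_fun (LinearMap.congr_fun hB x) y
    simpa [B1, B2] using h2
  -- unimodularity in inner-product form
  have htr0 : ∀ x : V, ∑ i, ⟪⁅x, e i⁆, e i⟫ = 0 := by
    intro x
    have h1 : LinearMap.trace ℝ V ((LieAlgebra.ad ℝ V) x)
        = ∑ i, ⟪e i, ⁅x, e i⁆⟫ := by
      rw [LinearMap.trace_eq_matrix_trace ℝ e.toBasis, Matrix.trace]
      refine Finset.sum_congr rfl fun i _ => ?_
      rw [Matrix.diag_apply, LinearMap.toMatrix_apply]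
      simp only [OrthonormalBasis.coe_toBasis, OrthonormalBasis.coe_toBasis_repr_apply,
        OrthonormalBasis.repr_apply_apply, LieAlgebra.ad_apply]
    calc ∑ i, ⟪⁅x, e i⁆, e i⟫ = ∑ i, ⟪e i, ⁅x, e i⁆⟫ := by
          refine Finset.sum_congr rfl fun i _ => real_inner_comm _ _
      _ = 0 := by rw [← h1, unimodular]
  -- T is symmetric
  have r10 : ⁅e 1, e 0⁆ = -⁅e 0, e 1⁆ := by rw [← lie_skew]
  have r20 : ⁅e 2, e 0⁆ = -⁅e 0, e 2⁆ := by rw [← lie_skew]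
  have r21 : ⁅e 2, e 1⁆ = -⁅e 1, e 2⁆ := by rw [← lie_skew]
  have hz0 := htr0 (e 0); have hz1 := htr0 (e 1); have hz2 := htr0 (e 2)
  rw [Fin.sum_univ_three] at hz0 hz1 hz2
  simp only [r10, r20, r21, lie_self, inner_zero_left, inner_neg_left] at hz0 hz1 hz2
  have hsymB : ∀ k l, ⟪T (e k), e l⟫ = ⟪T (e l), e k⟫ := by
    intro k l
    fin_cases k <;> fin_cases l
    all_goals try simp only [Fin.zero_eta, Fin.mk_one, Fin.reduceFinMk, hTe, hg,
      Matrix.cons_val_zero, Matrix.cons_val_one, Matrix.head_cons,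
      Matrix.cons_val_two, Matrix.tail_cons]
    all_goals try simp only [r10, r20, r21, lie_self, inner_zero_left, inner_neg_left]
    all_goals linarith [hz0, hz1, hz2]
  have hTsym : T.IsSymmetric := by
    let S1 : V →ₗ[ℝ] V →ₗ[ℝ] ℝ := LinearMap.mk₂ ℝ (fun x y => ⟪T x, y⟫)
      (fun x x' y => by simp only [map_add, inner_add_left])
      (fun cc x y => by simp only [map_smul, real_inner_smul_left]; rfl)
      (fun x y y' => by simp only [inner_add_right])
      (fun cc x y => by simp only [real_inner_smul_right]; rfl)
    let S2 : V →ₗ[ℝ] V →ₗ[ℝ] ℝ := LinearMap.mk₂ ℝ (fun x y => ⟪x, T y⟫)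
      (fun x x' y => by simp only [inner_add_left])
      (fun cc x y => by simp only [real_inner_smul_left]; rfl)
      (fun x y y' => by simp only [map_add, inner_add_right])
      (fun cc x y => by simp only [map_smul, real_inner_smul_right]; rfl)
    have hS : S1 = S2 := by
      apply LinearMap.ext_basis (b₁ := e.toBasis) (b₂ := e.toBasis)
      intro k l
      show ⟪T (e.toBasis k), e.toBasis l⟫ = ⟪e.toBasis k, T (e.toBasis l)⟫
      simp only [OrthonormalBasis.coe_toBasis]
      rw [show (inner ℝ (e k) (T (e l)) : ℝ) = inner ℝ (T (e l)) (e k) from real_inner_comm _ _]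
      exact hsymB k l
    intro x y
    have h2 := LinearMap.congr_fun (LinearMap.congr_fun hS x) y
    simpa [S1, S2] using h2
  -- spectral theorem
  set b : OrthonormalBasis (Fin 3) ℝ V := hTsym.eigenvectorBasis finrank_V with hb
  set μ : Fin 3 → ℝ := hTsym.eigenvalues finrank_V with hμdef
  have heig : ∀ i, T (b i) = μ i • b i := fun i => by
    exact_mod_cast hTsym.apply_eigenvectorBasis finrank_V i
  have hsurj : Function.Surjective T := by
    intro z
    refine ⟨(z.1 0 0) • crossb D e Es Fs + ((z.1 0 1)/2) • crossb D e Hs Es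
      + (-(z.1 1 0)/2) • crossb D e Hs Fs, ?_⟩
    rw [map_add, map_add, map_smul, map_smul, map_smul, ← hbrak, ← hbrak, ← hbrak]
    exact (decomp z).symm
  have hinj : Function.Injective T := (LinearMap.injective_iff_surjective).mpr hsurj
  have hμ : ∀ i, μ i ≠ 0 := by
    intro i h
    have h2 : b i = 0 := hinj (by rw [heig, h, zero_smul, map_zero])
    have h3 := b.toBasis.ne_zero i
    simp only [OrthonormalBasis.coe_toBasis] at h3
    exact h3 h2
  -- cross products of the eigenbasis
  set t : ℝ := D ![b 0, b 1, b 2] with ht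
  have hbB : ![b 0, b 1, b 2] = ⇑b.toBasis := by
    funext i; fin_cases i <;> simp [OrthonormalBasis.coe_toBasis]
  have htne : t ≠ 0 := by
    rw [ht, hbB, hD]
    exact (e.toBasis.isUnit_det b.toBasis).ne_zero
  have hexp : ∀ v : V, v = ⟪b 0, v⟫ • b 0 + ⟪b 1, v⟫ • b 1 + ⟪b 2, v⟫ • b 2 := by
    intro v
    have h2 := b.sum_repr' v
    rw [Fin.sum_univ_three] at h2
    exact h2.symm
  have hc12 : crossb D e (b 1) (b 2) = t • b 0 := by
    conv_lhs => rw [hexp (crossb D e (b 1) (b 2))]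
    rw [show (inner ℝ (b 0) (crossb D (⇑e) (b 1) (b 2)) : ℝ) = inner ℝ (crossb D (⇑e) (b 1) (b 2)) (b 0) from real_inner_comm _ _, show (inner ℝ (b 1) (crossb D (⇑e) (b 1) (b 2)) : ℝ) = inner ℝ (crossb D (⇑e) (b 1) (b 2)) (b 1) from real_inner_comm _ _, show (inner ℝ (b 2) (crossb D (⇑e) (b 1) (b 2)) : ℝ) = inner ℝ (crossb D (⇑e) (b 1) (b 2)) (b 2) from real_inner_comm _ _]
    rw [hK, hK, hK,
      Drep02, Drep12]
    have h0 : D ![b 1, b 2, b 0] = t := by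
      rw [Dswap01, Dswap12, Dswap01, Dswap12]; simp [ht]
    rw [h0]; simp
  have hc20 : crossb D e (b 2) (b 0) = t • b 1 := by
    conv_lhs => rw [hexp (crossb D e (b 2) (b 0))]
    rw [show (inner ℝ (b 0) (crossb D (⇑e) (b 2) (b 0)) : ℝ) = inner ℝ (crossb D (⇑e) (b 2) (b 0)) (b 0) from real_inner_comm _ _, show (inner ℝ (b 1) (crossb D (⇑e) (b 2) (b 0)) : ℝ) = inner ℝ (crossb D (⇑e) (b 2) (b 0)) (b 1) from real_inner_comm _ _, show (inner ℝ (b 2) (crossb D (⇑e) (b 2) (b 0)) : ℝ) = inner ℝ (crossb D (⇑e) (b 2) (b 0)) (b 2) from real_inner_comm _ _]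
    rw [hK, hK, hK,
      Drep12, Drep02]
    have h0 : D ![b 2, b 0, b 1] = t := by
      rw [Dswap01, Dswap12]; simp [ht]
    rw [h0]; simp
  have hc01 : crossb D e (b 0) (b 1) = t • b 2 := by
    conv_lhs => rw [hexp (crossb D e (b 0) (b 1))]
    rw [show (inner ℝ (b 0) (crossb D (⇑e) (b 0) (b 1)) : ℝ) = inner ℝ (crossb D (⇑e) (b 0) (b 1)) (b 0) from real_inner_comm _ _, show (inner ℝ (b 1) (crossb D (⇑e) (b 0) (b 1)) : ℝ) = inner ℝ (crossb D (⇑e) (b 0) (b 1)) (b 1) from real_inner_comm _ _, show (inner ℝ (b 2) (crossb D (⇑e) (b 0) (b 1)) : ℝ) = inner ℝ (crossb D (⇑e) (b 0) (b 1)) (b 2) from real_inner_comm _ _]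
    rw [hK, hK, hK, Drep02, Drep12, ← ht]
    simp
  -- assemble
  refine ⟨b.toBasis, ?_, t * μ 0, t * μ 1, t * μ 2,
    mul_ne_zero htne (hμ 0), mul_ne_zero htne (hμ 1), mul_ne_zero htne (hμ 2), ?_, ?_, ?_⟩
  · intro i j
    simp only [OrthonormalBasis.coe_toBasis]
    rw [← hinner]
    exact orthonormal_iff_ite.mp b.orthonormal i j
  · show ⁅b.toBasis 1, b.toBasis 2⁆ = (t * μ 0) • b.toBasis 0
    simp only [OrthonormalBasis.coe_toBasis]
    rw [hbrak, hc12, map_smul, heig, smul_smul]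
  · show ⁅b.toBasis 2, b.toBasis 0⁆ = (t * μ 1) • b.toBasis 1
    simp only [OrthonormalBasis.coe_toBasis]
    rw [hbrak, hc20, map_smul, heig, smul_smul]
  · show ⁅b.toBasis 0, b.toBasis 1⁆ = (t * μ 2) • b.toBasis 2
    simp only [OrthonormalBasis.coe_toBasis]
    rw [hbrak, hc01, map_smul, heig, smul_smul]
end
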